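/- (Uniform limit as λ → −∞) For every u ∈ ℝ^E, the Sparsegen routing output converges to the uniform distribution as λ → −∞: the map λ ↦ sparsegen(u, λ) tends to the vector (1/E, …, 1/E) as λ tends to −∞. In particular, for all λ < 1 − (U_E − E·u_(E)) every coordinate of sparsegen(u, λ) equals 1/E + (u_i − U_E/E)/(1 − λ), which tends to 1/E. -/

import Mathlib

noncomputable section

/-- The probability simplex in `ℝ^E`. -/
def simplex (E : ℕ) : Set (EuclideanSpace ℝ (Fin E)) :=
  {p | (∀ i, 0 ≤ p i) ∧ ∑ i, p i = 1}

/-- The Sparsegen objective `g_{u,λ}(p) = ‖p − u‖₂² − λ‖p‖₂²`. -/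
def sparsegenObj {E : ℕ} (u : EuclideanSpace ℝ (Fin E)) (lam : ℝ)
    (p : EuclideanSpace ℝ (Fin E)) : ℝ :=
  ‖p - u‖ ^ 2 - lam * ‖p‖ ^ 2

open Classical in
/-- The Sparsegen routing output: the (unique, for `λ < 1`) minimizer of the
Sparsegen objective over the probability simplex. -/
noncomputable def sparsegen {E : ℕ} (u : EuclideanSpace ℝ (Fin E)) (lam : ℝ) :
    EuclideanSpace ℝ (Fin E) :=
  if h : ∃ p ∈ simplex E, IsMinOn (sparsegenObj u lam) (simplex E) p then h.choose
  else 0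

lemma euclid_normsq {E : ℕ} (x : EuclideanSpace ℝ (Fin E)) : ‖x‖ ^ 2 = ∑ i, (x i) ^ 2 := by
  rw [EuclideanSpace.norm_eq, Real.sq_sqrt (by positivity)]
  simp [sq_abs]

open Filter in
/-- Uniform limit as `λ → −∞`. -/
theorem sparsegen_tendsto_uniform (E : ℕ) (hE : 1 ≤ E)
    (u : EuclideanSpace ℝ (Fin E)) (σ : Equiv.Perm (Fin E))
    (hσ : Antitone fun i => u (σ i)) :
    Filter.Tendsto (fun lam : ℝ => sparsegen u lam) Filter.atBot
      (nhds (WithLp.toLp 2 (fun _ : Fin E => (1 / E : ℝ)) : EuclideanSpace ℝ (Fin E))) ∧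
    (∀ lam : ℝ, lam < 1 - ((∑ j : Fin E, u (σ j)) - E * u (σ ⟨E - 1, by omega⟩)) →
      ∀ i : Fin E,
        sparsegen u lam i = 1 / E + (u i - (∑ j : Fin E, u (σ j)) / E) / (1 - lam)) ∧
    (∀ i : Fin E,
      Filter.Tendsto (fun lam : ℝ => 1 / E + (u i - (∑ j : Fin E, u (σ j)) / E) / (1 - lam))
        Filter.atBot (nhds (1 / E))) := by
  have hEpos : 0 < E := hE
  have hE0 : (0 : ℝ) < E := by exact_mod_cast hEpos
  set S : ℝ := ∑ j : Fin E, u (σ j) with hSdef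
  have hSsum : S = ∑ j, u j := Equiv.sum_comp σ u
  set m : ℝ := u (σ ⟨E - 1, by omega⟩) with hmdef
  have hmin : ∀ i, m ≤ u i := by
    intro i
    have h1 : (σ.symm i : Fin E) ≤ ⟨E - 1, by omega⟩ := by
      have h2 := (σ.symm i).isLt
      rw [Fin.le_def]
      show (σ.symm i).val ≤ E - 1
      omega
    have h3 := hσ h1
    rw [hmdef]
    calc u (σ ⟨E - 1, by omega⟩) ≤ u (σ (σ.symm i)) := h3
    _ = u i := by rw [Equiv.apply_symm_apply]
  have hSm : (E : ℝ) * m ≤ S := by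
    rw [hSdef]
    calc (E : ℝ) * m = ∑ _j : Fin E, m := by simp [Finset.sum_const, Finset.card_fin, mul_comm]
    _ ≤ ∑ j : Fin E, u (σ j) := Finset.sum_le_sum fun j _ => hmin (σ j)
  -- the candidate minimizer
  set pt : ℝ → EuclideanSpace ℝ (Fin E) :=
    fun lam => WithLp.toLp 2 (fun i => 1 / E + (u i - S / E) / (1 - lam)) with hptdef
  -- the coordinate-wise limit (third claim)
  have htend3 : ∀ i : Fin E,
      Filter.Tendsto (fun lam : ℝ => 1 / (E : ℝ) + (u i - S / E) / (1 - lam))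
        Filter.atBot (nhds (1 / E)) := by
    intro i
    have h0 : Filter.Tendsto (fun lam : ℝ => (u i - S / E) / (1 - lam)) atBot (nhds 0) :=
      Filter.Tendsto.div_atTop tendsto_const_nhds
        (tendsto_atTop_add_const_left _ 1 tendsto_neg_atBot_atTop)
    have h1 : Filter.Tendsto (fun lam : ℝ => 1 / (E : ℝ) + (u i - S / E) / (1 - lam))
        atBot (nhds (1 / (E : ℝ) + 0)) := Filter.Tendsto.add tendsto_const_nhds h0
    simpa using h1
  -- the key identification of sparsegen for small lam
  have key : ∀ lam : ℝ, lam < 1 - (S - E * m) → sparsegen u lam = pt lam := by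
    intro lam hlam
    have ht : 0 < 1 - lam := by nlinarith
    have hti : ∀ i, S - E * u i < 1 - lam := by
      intro i
      have h1 := hmin i
      nlinarith
    set p := pt lam with hp
    have hpi : ∀ i, p i = 1 / E + (u i - S / E) / (1 - lam) := fun i => rfl
    have hE0' : (E : ℝ) ≠ 0 := ne_of_gt hE0
    have htne : (1 : ℝ) - lam ≠ 0 := ne_of_gt ht
    have hpsum : ∑ i, p i = 1 := by
      simp only [hpi]
      have h2 : ∑ i : Fin E, ((u i - S / E) / (1 - lam))
          = (∑ i : Fin E, (u i - S / E)) / (1 - lam) := by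
        rw [Finset.sum_div]
      have h1 : ∑ i : Fin E, (1 / (E : ℝ) + (u i - S / E) / (1 - lam))
          = ∑ _i : Fin E, (1 / (E : ℝ)) + (∑ i : Fin E, (u i - S / E)) / (1 - lam) := by
        rw [Finset.sum_add_distrib, h2]
      rw [h1, Finset.sum_sub_distrib, ← hSsum]
      simp only [Finset.sum_const, Finset.card_fin, nsmul_eq_mul]
      field_simp
      ring
    have hpnn : ∀ i, 0 ≤ p i := by
      intro i
      rw [hpi]
      have heq : 1 / (E : ℝ) + (u i - S / E) / (1 - lam)
          = ((1 - lam) - (S - E * u i)) / (E * (1 - lam)) := by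
        field_simp
        ring
      rw [heq]
      apply div_nonneg
      · linarith [hti i]
      · positivity
    have hpmem : p ∈ simplex E := ⟨hpnn, hpsum⟩
    have hexpand : ∀ q : EuclideanSpace ℝ (Fin E),
        sparsegenObj u lam q = ∑ i, ((q i - u i) ^ 2 - lam * (q i) ^ 2) := by
      intro q
      rw [sparsegenObj, euclid_normsq, euclid_normsq, Finset.mul_sum, ← Finset.sum_sub_distrib]
      apply Finset.sum_congr rfl
      intro i _
      simp
    set c : ℝ := S / E - (1 - lam) / E with hc
    have hu : ∀ i, u i = (1 - lam) * p i + c := by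
      intro i
      rw [hpi i, hc]
      field_simp
      ring
    have hkey : ∀ q ∈ simplex E,
        sparsegenObj u lam q
          = sparsegenObj u lam p + (1 - lam) * ∑ i, (q i - p i) ^ 2 := by
      intro q hq
      rw [hexpand q, hexpand p]
      calc ∑ i, ((q i - u i) ^ 2 - lam * (q i) ^ 2)
          = ∑ i, ((((p i - u i) ^ 2 - lam * (p i) ^ 2) + (1 - lam) * (q i - p i) ^ 2)
              + 2 * c * (p i - q i)) := by
            apply Finset.sum_congr rfl
            intro i _
            rw [hu i]
            ring
        _ = (∑ i, ((p i - u i) ^ 2 - lam * (p i) ^ 2) + (1 - lam) * ∑ i, (q i - p i) ^ 2)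
              + 2 * c * (∑ i, p i - ∑ i, q i) := by
            rw [Finset.sum_add_distrib, Finset.sum_add_distrib, Finset.mul_sum,
              ← Finset.sum_sub_distrib, Finset.mul_sum]
        _ = _ := by rw [hpsum, hq.2]; ring
    have hminOn : IsMinOn (sparsegenObj u lam) (simplex E) p := by
      rw [isMinOn_iff]
      intro q hq
      rw [hkey q hq]
      have h1 : 0 ≤ ∑ i, (q i - p i) ^ 2 := Finset.sum_nonneg fun i _ => sq_nonneg _
      nlinarith
    have hex : ∃ q ∈ simplex E, IsMinOn (sparsegenObj u lam) (simplex E) q :=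
      ⟨p, hpmem, hminOn⟩
    rw [sparsegen, dif_pos hex]
    obtain ⟨hmem, hminc⟩ := hex.choose_spec
    have h1 : sparsegenObj u lam hex.choose ≤ sparsegenObj u lam p :=
      isMinOn_iff.mp hminc p hpmem
    have h2 := hkey hex.choose hmem
    have hnn : 0 ≤ ∑ i, (hex.choose i - p i) ^ 2 :=
      Finset.sum_nonneg fun i _ => sq_nonneg _
    have hsum0 : ∑ i, (hex.choose i - p i) ^ 2 = 0 := by nlinarith
    ext i
    have h3 := (Finset.sum_eq_zero_iff_of_nonneg (fun i _ => sq_nonneg _)).mp hsum0 i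
      (Finset.mem_univ i)
    have h4 : hex.choose i - p i = 0 := by
      have := sq_eq_zero_iff.mp h3
      exact this
    linarith
  refine ⟨?_, ?_, htend3⟩
  · -- main tendsto claim
    set e := EuclideanSpace.equiv (Fin E) ℝ with he
    have hT : Tendsto (fun lam : ℝ => e (sparsegen u lam)) atBot
        (nhds (e (WithLp.toLp 2 (fun _ : Fin E => (1 / E : ℝ)) : EuclideanSpace ℝ (Fin E)))) := by
      rw [tendsto_pi_nhds]
      intro i
      have hval : e (WithLp.toLp 2 (fun _ : Fin E => (1 / E : ℝ)) : EuclideanSpace ℝ (Fin E)) i = 1 / (E : ℝ) := rfl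
      rw [hval]
      apply Filter.Tendsto.congr' ?_ (htend3 i)
      filter_upwards [eventually_lt_atBot (1 - (S - E * m))] with lam hl
      rw [key lam hl]
      rfl
    have := ((e.symm.continuous.tendsto _).comp hT)
    simpa [Function.comp_def] using this
  · -- the formula claim
    intro lam hl i
    rw [key lam hl]
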